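/- arXiv:2008.01629 — 2 statements merged into one kernel-verified Lean document; each statement's English description precedes it below -/
import Mathlib

section
/- Let e = (e^μ_α) be a real invertible 4×4 matrix and γ^μ := Σ_α e^μ_α γ^α_E. Let A_μ = diag_C(Q_μ, M_μ), μ = 0,…,3, be 128×128 matrices with the free 1-form block structure determined by components c^r_μ, c^l_μ ∈ ℂ, q^r_μ, q^l_μ ∈ M₂(ℂ), m^r_μ, m^l_μ ∈ M₃(ℂ). Then the matrix A̸ := −i Σ_μ (γ^μ⊗I₃₂)·A_μ is Hermitian if and only if ρ(A_μ) = −A_μ† for every μ, which holds if and only if c^l_μ = −conj(c^r_μ), q^l_μ = −(q^r_μ)† and m^l_μ = −(m^r_μ)† for every μ. -/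
open Matrix

noncomputable section

namespace TwistSM

/-! ### Dirac matrices -/

def pauli1 : Matrix (Fin 2) (Fin 2) ℂ := !![0, 1; 1, 0]
def pauli2 : Matrix (Fin 2) (Fin 2) ℂ := !![0, -Complex.I; Complex.I, 0]
def pauli3 : Matrix (Fin 2) (Fin 2) ℂ := !![1, 0; 0, -1]

/-- σ^μ = (I₂, −iσ₁, −iσ₂, −iσ₃) -/
def sigE : Fin 4 → Matrix (Fin 2) (Fin 2) ℂ :=
  ![1, (-Complex.I) • pauli1, (-Complex.I) • pauli2, (-Complex.I) • pauli3]
/-- σ̃^μ = (I₂, iσ₁, iσ₂, iσ₃) -/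
def sigTE : Fin 4 → Matrix (Fin 2) (Fin 2) ℂ :=
  ![1, Complex.I • pauli1, Complex.I • pauli2, Complex.I • pauli3]

/-- Diagonal 2×2 block matrix [[A,0],[0,B]] over a leading `Fin 2` index. -/
def dgB {m : Type} (A B : Matrix m m ℂ) : Matrix (Fin 2 × m) (Fin 2 × m) ℂ :=
  Matrix.of fun p q =>
    if p.1 = q.1 then (if p.1 = 0 then A p.2 q.2 else B p.2 q.2) else 0

/-- Off-diagonal 2×2 block matrix [[0,A],[B,0]] over a leading `Fin 2` index. -/
def odB {m : Type} (A B : Matrix m m ℂ) : Matrix (Fin 2 × m) (Fin 2 × m) ℂ :=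
  Matrix.of fun p q =>
    if p.1 = 0 then (if q.1 = 0 then 0 else A p.2 q.2)
    else (if q.1 = 0 then B p.2 q.2 else 0)

/-- Euclidean Dirac matrices γ^μ_E = [[0, σ^μ],[σ̃^μ, 0]], acting on the spinor
indices (s, ṡ). -/
def gammaE (μ : Fin 4) : Matrix (Fin 2 × Fin 2) (Fin 2 × Fin 2) ℂ := odB (sigE μ) (sigTE μ)

/-- Entrywise complex conjugation of a matrix. -/
def mconj {m n : Type} (A : Matrix m n ℂ) : Matrix m n ℂ := A.map (starRingEnd ℂ)

/-- C = i γ⁰_E γ²_E (the matrix part of the charge conjugation 𝒥 = C ∘ cc). -/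
def Kspin : Matrix (Fin 2 × Fin 2) (Fin 2 × Fin 2) ℂ := Complex.I • (gammaE 0 * gammaE 2)

/-! ### The twisted algebra and its representation on ℂ¹²⁸ -/

/-- Quaternionic 2×2 matrices: of the form [[α,β],[−conj β, conj α]]. -/
def IsQuat (q : Matrix (Fin 2) (Fin 2) ℂ) : Prop :=
  q 1 0 = -(starRingEnd ℂ) (q 0 1) ∧ q 1 1 = (starRingEnd ℂ) (q 0 0)

/-- An element (c, c', q, q', m, m') of the twisted algebra. -/
structure Alg : Type where
  c : ℂ
  c' : ℂ
  q : Matrix (Fin 2) (Fin 2) ℂ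
  q' : Matrix (Fin 2) (Fin 2) ℂ
  m : Matrix (Fin 3) (Fin 3) ℂ
  m' : Matrix (Fin 3) (Fin 3) ℂ
  hq : IsQuat q
  hq' : IsQuat q'

/-- The twist ρ: exchange primed and unprimed entries. -/
def Alg.rho (a : Alg) : Alg := ⟨a.c', a.c, a.q', a.q, a.m', a.m, a.hq', a.hq⟩

/-- Flavour index α, as a pair (flavour pair, index within the pair):
(0,0) = 1̇, (0,1) = 2̇, (1,0) = 1, (1,1) = 2. -/
abbrev Flav : Type := Fin 2 × Fin 2
/-- Internal index (I, α): lepto-colour I ∈ Fin 4 and flavour α. -/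
abbrev Intl : Type := Fin 4 × Flav
/-- (ṡ, (I, α)) -/
abbrev HalfNoS : Type := Fin 2 × Intl
/-- Half of the full space: (s, ṡ, (I, α)). -/
abbrev Half : Type := Fin 2 × HalfNoS
/-- ℂ¹²⁸, indexed by (C, s, ṡ, (I, α)). -/
abbrev Full : Type := Fin 2 × Half

/-- diag(c, conj c) as a 2×2 matrix. -/
def cdiag (c : ℂ) : Matrix (Fin 2) (Fin 2) ℂ := Matrix.diagonal ![c, (starRingEnd ℂ) c]

def pred3 (i : Fin 4) : Fin 3 := ⟨i.val - 1, by have := i.isLt; omega⟩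

/-- diag(c, m) as a 4×4 matrix on the lepto-colour index. -/
def sm4 (c : ℂ) (m : Matrix (Fin 3) (Fin 3) ℂ) : Matrix (Fin 4) (Fin 4) ℂ :=
  Matrix.of fun i j =>
    if i = 0 then (if j = 0 then c else 0)
    else if j = 0 then 0 else m (pred3 i) (pred3 j)

/-- Q_r = diag(c, conj c, q') on the flavour index. -/
def Qr (a : Alg) : Matrix Flav Flav ℂ := dgB (cdiag a.c) a.q'
/-- Q_l = diag(c', conj c', q) on the flavour index. -/
def Ql (a : Alg) : Matrix Flav Flav ℂ := dgB (cdiag a.c') a.q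

/-- diag_α(A⊗I₂, B⊗I₂) on (I, α). -/
def msect (A B : Matrix (Fin 4) (Fin 4) ℂ) : Matrix Intl Intl ℂ :=
  Matrix.of fun p q =>
    if p.2 = q.2 then (if p.2.1 = 0 then A p.1 q.1 else B p.1 q.1) else 0

/-- M_r = diag_α(𝗆⊗I₂, 𝗆'⊗I₂). -/
def Mr (a : Alg) : Matrix Intl Intl ℂ := msect (sm4 a.c a.m) (sm4 a.c' a.m')
/-- M_l = diag_α(𝗆'⊗I₂, 𝗆⊗I₂). -/
def Ml (a : Alg) : Matrix Intl Intl ℂ := msect (sm4 a.c' a.m') (sm4 a.c a.m)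

/-- Lift a flavour matrix to (ṡ, (I, α)), acting trivially on ṡ and I. -/
def liftQ (X : Matrix Flav Flav ℂ) : Matrix HalfNoS HalfNoS ℂ :=
  Matrix.of fun p q => if p.1 = q.1 ∧ p.2.1 = q.2.1 then X p.2.2 q.2.2 else 0

/-- Lift a matrix on (I, α) to (ṡ, (I, α)), acting trivially on ṡ. -/
def liftI (X : Matrix Intl Intl ℂ) : Matrix HalfNoS HalfNoS ℂ :=
  Matrix.of fun p q => if p.1 = q.1 then X p.2 q.2 else 0

/-- The Q-block of the representation: diag_s(Q_r, Q_l), trivial on ṡ and I. -/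
def Qmat (a : Alg) : Matrix Half Half ℂ := dgB (liftQ (Qr a)) (liftQ (Ql a))
/-- The M-block of the representation: diag_s(M_r, M_l), trivial on ṡ. -/
def Mmat (a : Alg) : Matrix Half Half ℂ := dgB (liftI (Mr a)) (liftI (Ml a))

/-- The representation π(a) = diag_C(Q, M) of the twisted algebra on ℂ¹²⁸. -/
def rep (a : Alg) : Matrix Full Full ℂ := dgB (Qmat a) (Mmat a)

/-- Twisted commutator [T, π(b)]_ρ = T·π(b) − π(ρ(b))·T. -/
def tcomm (T : Matrix Full Full ℂ) (b : Alg) : Matrix Full Full ℂ :=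
  T * rep b - rep b.rho * T

/-- K = (i γ⁰_E γ²_E) ⊗ ξ ⊗ I₁₆ (with ξ on the internal index C);
the real structure is J = K ∘ cc. -/
def Kmat : Matrix Full Full ℂ :=
  Matrix.of fun p q =>
    (!![0, 1; 1, 0] : Matrix (Fin 2) (Fin 2) ℂ) p.1 q.1 *
      Kspin (p.2.1, p.2.2.1) (q.2.1, q.2.2.1) *
      (if p.2.2.2 = q.2.2.2 then 1 else 0)

/-- J T J⁻¹ = −K · conj(T) · conj(K) as a matrix operation. -/
def Jconj (T : Matrix Full Full ℂ) : Matrix Full Full ℂ := -(Kmat * mconj T * mconj Kmat)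

/-! ### Yukawa and Majorana parts of the Dirac operator -/

/-- 𝗄^I = diag(k_u^I, k_d^I). -/
def kdiag (kν ke ku kd : ℂ) (i : Fin 4) : Matrix (Fin 2) (Fin 2) ℂ :=
  if i = 0 then Matrix.diagonal ![kν, ke] else Matrix.diagonal ![ku, kd]

/-- Block-diagonal matrix on (I, α) from a family of flavour matrices. -/
def diagI (F : Fin 4 → Matrix Flav Flav ℂ) : Matrix Intl Intl ℂ :=
  Matrix.of fun p q => if p.1 = q.1 then F p.1 p.2 q.2 else 0

/-- The Yukawa mass matrix D₀ = diag_I(D₀^I), D₀^I = [[0, conj 𝗄^I],[𝗄^I, 0]]. -/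
def D0 (kν ke ku kd : ℂ) : Matrix Intl Intl ℂ :=
  diagI fun i => odB (mconj (kdiag kν ke ku kd i)) (kdiag kν ke ku kd i)

/-- η ⊗ X, with η = diag_s(1,−1) ⊗ I₂ on (s, ṡ) and X on (I, α). -/
def etaD (X : Matrix Intl Intl ℂ) : Matrix Half Half ℂ := dgB (liftI X) (liftI (-X))

/-- γ⁵ ⊗ D_Y = diag_C(η⊗D₀, η⊗D₀†). -/
def g5DY (kν ke ku kd : ℂ) : Matrix Full Full ℂ :=
  dgB (etaD (D0 kν ke ku kd)) (etaD ((D0 kν ke ku kd)ᴴ))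

/-- Ξ = diag(1,0,0,0)_I ⊗ diag(1,0,0,0)_α on (I, α). -/
def XiI : Matrix Intl Intl ℂ :=
  Matrix.of fun p q =>
    if p = q ∧ p.1 = 0 ∧ p.2 = ((0 : Fin 2), (0 : Fin 2)) then 1 else 0

/-- γ⁵ ⊗ D_M = [[0, η⊗D_R],[η⊗D_R†, 0]]_C with D_R = k_R Ξ. -/
def g5DM (kR : ℂ) : Matrix Full Full ℂ :=
  odB (etaD (kR • XiI)) (etaD ((kR • XiI)ᴴ))

/-! ### The free 1-form -/

/-- Lift a spinor matrix (on (s, ṡ)) to ℂ¹²⁸, identity on C and (I, α). -/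
def liftSpin (G : Matrix (Fin 2 × Fin 2) (Fin 2 × Fin 2) ℂ) : Matrix Full Full ℂ :=
  Matrix.of fun p q =>
    (if p.1 = q.1 ∧ p.2.2.2 = q.2.2.2 then 1 else 0) * G (p.2.1, p.2.2.1) (q.2.1, q.2.2.1)

/-- Q_μ = diag_s(Q^r_μ, Q^l_μ), Q^{r/l}_μ = diag(c^{r/l}, conj c^{r/l}, q^{r/l}),
trivial on ṡ and I. -/
def freeQ (cr cl : ℂ) (qr ql : Matrix (Fin 2) (Fin 2) ℂ) : Matrix Half Half ℂ :=
  dgB (liftQ (dgB (cdiag cr) qr)) (liftQ (dgB (cdiag cl) ql))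

/-- M_μ = diag_s(M^r_μ, M^l_μ), M^r_μ = diag_α(𝗆^r⊗I₂, 𝗆^l⊗I₂), 𝗆^{r/l} = diag(c^{r/l}, m^{r/l}),
trivial on ṡ. -/
def freeM (cr cl : ℂ) (mr ml : Matrix (Fin 3) (Fin 3) ℂ) : Matrix Half Half ℂ :=
  dgB (liftI (msect (sm4 cr mr) (sm4 cl ml))) (liftI (msect (sm4 cl ml) (sm4 cr mr)))

/-- The free 1-form coefficient matrix A_μ = diag_C(Q_μ, M_μ). -/
def freeA (cr cl : ℂ) (qr ql : Matrix (Fin 2) (Fin 2) ℂ)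
    (mr ml : Matrix (Fin 3) (Fin 3) ℂ) : Matrix Full Full ℂ :=
  dgB (freeQ cr cl qr ql) (freeM cr cl mr ml)

/-! ### Partial derivatives -/

/-- Partial derivative in the μ-th coordinate direction of ℝ⁴ (ℂ-valued). -/
def pdC (μ : Fin 4) (f : (Fin 4 → ℝ) → ℂ) (x : Fin 4 → ℝ) : ℂ :=
  fderiv ℝ f x (Pi.single μ 1)

/-- Partial derivative in the μ-th coordinate direction of ℝ⁴ (ℝ-valued). -/
def pdR (μ : Fin 4) (f : (Fin 4 → ℝ) → ℝ) (x : Fin 4 → ℝ) : ℝ :=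
  fderiv ℝ f x (Pi.single μ 1)

/-- Entrywise partial derivative of a matrix-valued function. -/
def pdM {m n : Type} (μ : Fin 4) (F : (Fin 4 → ℝ) → Matrix m n ℂ) (x : Fin 4 → ℝ) :
    Matrix m n ℂ :=
  Matrix.of fun i j => pdC μ (fun y => F y i j) x


/-! ### Auxiliary machinery for statement 12 -/

section Aux
open Kronecker

/-! #### Block matrix algebra -/

variable {k : Type} [Fintype k]

lemma dgB_mul_dgB (A B C D : Matrix k k ℂ) : dgB A B * dgB C D = dgB (A * C) (B * D) := by
  ext ⟨i, x⟩ ⟨j, y⟩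
  fin_cases i <;> fin_cases j <;>
    simp [dgB, mul_apply, Fintype.sum_prod_type, Fin.sum_univ_two]

lemma odB_mul_dgB (A B C D : Matrix k k ℂ) : odB A B * dgB C D = odB (A * D) (B * C) := by
  ext ⟨i, x⟩ ⟨j, y⟩
  fin_cases i <;> fin_cases j <;>
    simp [dgB, odB, mul_apply, Fintype.sum_prod_type, Fin.sum_univ_two]

omit [Fintype k]

lemma dgB_conjT (A B : Matrix k k ℂ) : (dgB A B)ᴴ = dgB Aᴴ Bᴴ := by
  ext ⟨i, x⟩ ⟨j, y⟩
  fin_cases i <;> fin_cases j <;> simp [dgB, conjTranspose_apply]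

lemma odB_conjT (A B : Matrix k k ℂ) : (odB A B)ᴴ = odB Bᴴ Aᴴ := by
  ext ⟨i, x⟩ ⟨j, y⟩
  fin_cases i <;> fin_cases j <;> simp [odB, conjTranspose_apply]

lemma dgB_inj (A B C D : Matrix k k ℂ) : dgB A B = dgB C D ↔ A = C ∧ B = D := by
  constructor
  · intro h
    have h' := Matrix.ext_iff.2 h
    constructor <;> ext x y
    · simpa [dgB] using h' (0, x) (0, y)
    · simpa [dgB] using h' (1, x) (1, y)
  · rintro ⟨rfl, rfl⟩; rfl

lemma odB_inj (A B C D : Matrix k k ℂ) : odB A B = odB C D ↔ A = C ∧ B = D := by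
  constructor
  · intro h
    have h' := Matrix.ext_iff.2 h
    constructor <;> ext x y
    · simpa [odB] using h' (0, x) (1, y)
    · simpa [odB] using h' (1, x) (0, y)
  · rintro ⟨rfl, rfl⟩; rfl

lemma dgB_zero : dgB (0 : Matrix k k ℂ) 0 = 0 := by
  ext ⟨i, x⟩ ⟨j, y⟩; simp [dgB]

lemma odB_zero : odB (0 : Matrix k k ℂ) 0 = 0 := by
  ext ⟨i, x⟩ ⟨j, y⟩; simp [odB]

lemma dgB_eq_zero (A B : Matrix k k ℂ) : dgB A B = 0 ↔ A = 0 ∧ B = 0 := by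
  rw [← dgB_zero]; exact dgB_inj A B 0 0

lemma odB_eq_zero (A B : Matrix k k ℂ) : odB A B = 0 ↔ A = 0 ∧ B = 0 := by
  rw [← odB_zero]; exact odB_inj A B 0 0

lemma dgB_smul (r : ℂ) (A B : Matrix k k ℂ) : dgB (r • A) (r • B) = r • dgB A B := by
  ext ⟨i, x⟩ ⟨j, y⟩; simp only [dgB, of_apply, Matrix.smul_apply, smul_eq_mul]
  split_ifs <;> simp

lemma odB_smul (r : ℂ) (A B : Matrix k k ℂ) : odB (r • A) (r • B) = r • odB A B := by
  ext ⟨i, x⟩ ⟨j, y⟩; simp only [odB, of_apply, Matrix.smul_apply, smul_eq_mul]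
  split_ifs <;> simp

lemma dgB_add (A B C D : Matrix k k ℂ) : dgB (A + C) (B + D) = dgB A B + dgB C D := by
  ext ⟨i, x⟩ ⟨j, y⟩; simp only [dgB, of_apply, Matrix.add_apply]
  split_ifs <;> simp

lemma odB_add (A B C D : Matrix k k ℂ) : odB (A + C) (B + D) = odB A B + odB C D := by
  ext ⟨i, x⟩ ⟨j, y⟩; simp only [odB, of_apply, Matrix.add_apply]
  split_ifs <;> simp

lemma dgB_neg (A B : Matrix k k ℂ) : dgB (-A) (-B) = -dgB A B := by
  ext ⟨i, x⟩ ⟨j, y⟩; simp only [dgB, of_apply, Matrix.neg_apply]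
  split_ifs <;> simp

lemma dgB_sum {ι : Type} (s : Finset ι) (f g : ι → Matrix k k ℂ) :
    dgB (∑ i ∈ s, f i) (∑ i ∈ s, g i) = ∑ i ∈ s, dgB (f i) (g i) := by
  classical
  induction s using Finset.induction with
  | empty => simp [dgB_zero]
  | insert h ih => simp_all [dgB_add]

lemma odB_sum {ι : Type} (s : Finset ι) (f g : ι → Matrix k k ℂ) :
    odB (∑ i ∈ s, f i) (∑ i ∈ s, g i) = ∑ i ∈ s, odB (f i) (g i) := by
  classical
  induction s using Finset.induction with
  | empty => simp [odB_zero]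
  | insert h ih => simp_all [odB_add]

/-! #### Kronecker helpers -/

lemma kron_conjT {m n : Type} (A : Matrix m m ℂ) (B : Matrix n n ℂ) :
    (A ⊗ₖ B)ᴴ = Aᴴ ⊗ₖ Bᴴ := by
  ext ⟨i, x⟩ ⟨j, y⟩
  simp [conjTranspose_apply, kroneckerMap_apply, _root_.map_mul]

lemma kron_neg_right {m n : Type} (A : Matrix m m ℂ) (B : Matrix n n ℂ) :
    A ⊗ₖ (-B) = -(A ⊗ₖ B) := by
  ext ⟨i, x⟩ ⟨j, y⟩
  simp [kroneckerMap_apply]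

lemma one_kron_iff {n : Type} {κ : Type} [Inhabited κ] [DecidableEq κ]
    (A B : Matrix n n ℂ) : (1 : Matrix κ κ ℂ) ⊗ₖ A = 1 ⊗ₖ B ↔ A = B := by
  constructor
  · intro h
    ext x y
    have := Matrix.ext_iff.2 h (default, x) (default, y)
    simpa [kroneckerMap_apply, Matrix.one_apply] using this
  · rintro rfl; rfl

lemma kron_id_mul {κ : Type} [Fintype κ] [DecidableEq κ]
    (σ : Matrix (Fin 2) (Fin 2) ℂ) (Y : Matrix κ κ ℂ) :
    (σ ⊗ₖ (1 : Matrix κ κ ℂ)) * ((1 : Matrix (Fin 2) (Fin 2) ℂ) ⊗ₖ Y) = σ ⊗ₖ Y := by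
  rw [← Matrix.mul_kronecker_mul, mul_one, one_mul]

/-! #### σ-matrix facts -/

lemma sigE_conjT (α : Fin 4) : (sigE α)ᴴ = sigTE α := by
  fin_cases α <;> ext i j <;> fin_cases i <;> fin_cases j <;>
    simp [sigE, sigTE, pauli1, pauli2, pauli3, conjTranspose_apply, Matrix.one_apply]

lemma sigTE_conjT (α : Fin 4) : (sigTE α)ᴴ = sigE α := by
  rw [← sigE_conjT, conjTranspose_conjTranspose]

/-- Linear independence of the σ^α combined with invertibility of e. -/
lemma indep {n : Type} [Fintype n] [DecidableEq n] (e : Matrix (Fin 4) (Fin 4) ℝ)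
    (he : IsUnit e) (Z : Fin 4 → Matrix n n ℂ) :
    (∑ μ, ∑ α, (e μ α : ℂ) • (sigE α ⊗ₖ Z μ)) = 0 ↔ ∀ μ, Z μ = 0 := by
  constructor
  · intro h μ
    ext v w
    set z : Fin 4 → ℂ := fun ν => Z ν v w with hz
    have key : ∀ a b : Fin 2, ∑ α : Fin 4, sigE α a b * (∑ ν, (e ν α : ℂ) * z ν) = 0 := by
      intro a b
      have h' := Matrix.ext_iff.2 h (a, v) (b, w)
      simp only [Matrix.sum_apply, Matrix.smul_apply, kroneckerMap_apply, Matrix.zero_apply,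
        smul_eq_mul] at h'
      rw [← h', Finset.sum_comm]
      apply Finset.sum_congr rfl; intro α _
      rw [Finset.mul_sum]
      apply Finset.sum_congr rfl; intro ν _
      ring
    have e00 := key 0 0
    have e11 := key 1 1
    have e01 := key 0 1
    have e10 := key 1 0
    simp only [Fin.sum_univ_four, sigE, pauli1, pauli2, pauli3, Matrix.cons_val] at e00 e11 e01 e10
    norm_num [Matrix.smul_apply, Matrix.one_apply] at e00 e11 e01 e10
    have hw0 : (∑ ν, (e ν 0 : ℂ) * z ν) = 0 := by
      rw [Fin.sum_univ_four]; linear_combination (e00 + e11) / 2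
    have hw1 : (∑ ν, (e ν 1 : ℂ) * z ν) = 0 := by
      rw [Fin.sum_univ_four]
      linear_combination (Complex.I / 2) * (e01 + e10) +
        (↑(e 0 1) * z 0 + ↑(e 1 1) * z 1 + ↑(e 2 1) * z 2 + ↑(e 3 1) * z 3) * Complex.I_mul_I
    have hw2 : (∑ ν, (e ν 2 : ℂ) * z ν) = 0 := by
      rw [Fin.sum_univ_four]; linear_combination (e10 - e01) / 2
    have hw3 : (∑ ν, (e ν 3 : ℂ) * z ν) = 0 := by
      rw [Fin.sum_univ_four]
      linear_combination (-Complex.I / 2) * (e11 - e00) +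
        (↑(e 0 3) * z 0 + ↑(e 1 3) * z 1 + ↑(e 2 3) * z 2 + ↑(e 3 3) * z 3) * Complex.I_mul_I
    have hw : ∀ α : Fin 4, (∑ ν, (e ν α : ℂ) * z ν) = 0 := by
      intro α; fin_cases α
      · exact hw0
      · exact hw1
      · exact hw2
      · exact hw3
    have hA : IsUnit ((e.map (Complex.ofReal))ᵀ) := by
      rw [Matrix.isUnit_transpose]
      exact he.map (RingHom.mapMatrix (algebraMap ℝ ℂ))
    have hinj := Matrix.mulVec_injective_iff_isUnit.2 hA
    have hz0 : (e.map (Complex.ofReal))ᵀ *ᵥ z = (e.map (Complex.ofReal))ᵀ *ᵥ 0 := by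
      ext α
      simp only [Matrix.mulVec, dotProduct, Matrix.transpose_apply, Matrix.map_apply,
        Pi.zero_apply, mul_zero, Finset.sum_const_zero]
      exact hw α
    have := congrFun (hinj hz0) μ
    simpa [hz] using this
  · intro h
    simp [h]

/-! #### Structure of the lifted matrices -/

lemma liftQ_eq (X : Matrix Flav Flav ℂ) :
    liftQ X = (1 : Matrix (Fin 2) (Fin 2) ℂ) ⊗ₖ ((1 : Matrix (Fin 4) (Fin 4) ℂ) ⊗ₖ X) := by
  ext ⟨a, b, c⟩ ⟨a', b', c'⟩
  by_cases h1 : a = a' <;> by_cases h2 : b = b' <;>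
    simp [liftQ, kroneckerMap_apply, Matrix.one_apply, h1, h2]

lemma liftI_eq (X : Matrix Intl Intl ℂ) :
    liftI X = (1 : Matrix (Fin 2) (Fin 2) ℂ) ⊗ₖ X := by
  ext ⟨a, b⟩ ⟨a', b'⟩
  by_cases h1 : a = a' <;> simp [liftI, kroneckerMap_apply, Matrix.one_apply, h1]

lemma liftSpin_gamma (α : Fin 4) :
    liftSpin (gammaE α) =
      dgB (odB (sigE α ⊗ₖ (1 : Matrix Intl Intl ℂ)) (sigTE α ⊗ₖ 1))
        (odB (sigE α ⊗ₖ 1) (sigTE α ⊗ₖ 1)) := by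
  ext ⟨c, s, ds, v⟩ ⟨c', s', ds', w⟩
  fin_cases c <;> fin_cases c' <;> fin_cases s <;> fin_cases s' <;>
    simp [liftSpin, gammaE, odB, dgB, kroneckerMap_apply, Matrix.one_apply, mul_comm]

lemma liftSpin_smul (r : ℂ) (G : Matrix (Fin 2 × Fin 2) (Fin 2 × Fin 2) ℂ) :
    liftSpin (r • G) = r • liftSpin G := by
  ext p q
  simp only [liftSpin, of_apply, Matrix.smul_apply, smul_eq_mul]
  ring

lemma liftSpin_sum {ι : Type} (s : Finset ι) (f : ι → Matrix (Fin 2 × Fin 2) (Fin 2 × Fin 2) ℂ) :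
    liftSpin (∑ i ∈ s, f i) = ∑ i ∈ s, liftSpin (f i) := by
  ext p q
  simp [liftSpin, Matrix.sum_apply, Finset.mul_sum]

end Aux

section Aux2
open Kronecker

lemma GL_mul_freeA (α : Fin 4) (cr cl : ℂ) (qr ql : Matrix (Fin 2) (Fin 2) ℂ)
    (mr ml : Matrix (Fin 3) (Fin 3) ℂ) :
    liftSpin (gammaE α) * freeA cr cl qr ql mr ml =
      dgB
        (odB (sigE α ⊗ₖ ((1 : Matrix (Fin 4) (Fin 4) ℂ) ⊗ₖ dgB (cdiag cl) ql))
          (sigTE α ⊗ₖ ((1 : Matrix (Fin 4) (Fin 4) ℂ) ⊗ₖ dgB (cdiag cr) qr)))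
        (odB (sigE α ⊗ₖ msect (sm4 cl ml) (sm4 cr mr))
          (sigTE α ⊗ₖ msect (sm4 cr mr) (sm4 cl ml))) := by
  rw [liftSpin_gamma, freeA, freeQ, freeM, liftQ_eq, liftQ_eq, liftI_eq, liftI_eq,
    dgB_mul_dgB, odB_mul_dgB, odB_mul_dgB, kron_id_mul, kron_id_mul, kron_id_mul, kron_id_mul]

/-- The slashed 1-form in canonical block form. -/
lemma Mform (e : Matrix (Fin 4) (Fin 4) ℝ) (cr cl : Fin 4 → ℂ)
    (qr ql : Fin 4 → Matrix (Fin 2) (Fin 2) ℂ) (mr ml : Fin 4 → Matrix (Fin 3) (Fin 3) ℂ) :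
    ((-Complex.I) • ∑ μ, liftSpin (∑ α, (e μ α : ℂ) • gammaE α) *
        freeA (cr μ) (cl μ) (qr μ) (ql μ) (mr μ) (ml μ)) =
    (-Complex.I) • dgB
      (odB (∑ μ, ∑ α, (e μ α : ℂ) •
            (sigE α ⊗ₖ ((1 : Matrix (Fin 4) (Fin 4) ℂ) ⊗ₖ dgB (cdiag (cl μ)) (ql μ))))
        (∑ μ, ∑ α, (e μ α : ℂ) •
            (sigTE α ⊗ₖ ((1 : Matrix (Fin 4) (Fin 4) ℂ) ⊗ₖ dgB (cdiag (cr μ)) (qr μ)))))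
      (odB (∑ μ, ∑ α, (e μ α : ℂ) • (sigE α ⊗ₖ msect (sm4 (cl μ) (ml μ)) (sm4 (cr μ) (mr μ))))
        (∑ μ, ∑ α, (e μ α : ℂ) •
            (sigTE α ⊗ₖ msect (sm4 (cr μ) (mr μ)) (sm4 (cl μ) (ml μ))))) := by
  congr 1
  rw [odB_sum, odB_sum, dgB_sum]
  refine Finset.sum_congr rfl fun μ _ => ?_
  rw [odB_sum, odB_sum, dgB_sum]
  have : liftSpin (∑ α, (e μ α : ℂ) • gammaE α) = ∑ α, (e μ α : ℂ) • liftSpin (gammaE α) := by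
    rw [liftSpin_sum]
    exact Finset.sum_congr rfl fun α _ => liftSpin_smul _ _
  rw [this, Finset.sum_mul]
  refine Finset.sum_congr rfl fun α _ => ?_
  rw [smul_mul_assoc, GL_mul_freeA, odB_smul, odB_smul, dgB_smul]

lemma negConjT_comm {n : Type} (A B : Matrix n n ℂ) : A = -Bᴴ ↔ B = -Aᴴ := by
  constructor <;> rintro rfl <;> simp

/-- Hermiticity of the slashed 1-form, block version. -/
lemma herm_iff (e : Matrix (Fin 4) (Fin 4) ℝ) (he : IsUnit e) (cr cl : Fin 4 → ℂ)
    (qr ql : Fin 4 → Matrix (Fin 2) (Fin 2) ℂ) (mr ml : Fin 4 → Matrix (Fin 3) (Fin 3) ℂ) :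
    ((-Complex.I) • ∑ μ, liftSpin (∑ α, (e μ α : ℂ) • gammaE α) *
        freeA (cr μ) (cl μ) (qr μ) (ql μ) (mr μ) (ml μ)).IsHermitian ↔
      ∀ μ, dgB (cdiag (cl μ)) (ql μ) = -(dgB (cdiag (cr μ)) (qr μ))ᴴ ∧
        msect (sm4 (cl μ) (ml μ)) (sm4 (cr μ) (mr μ))
          = -(msect (sm4 (cr μ) (mr μ)) (sm4 (cl μ) (ml μ)))ᴴ := by
  rw [Mform]
  set L1 : Fin 4 → Matrix Intl Intl ℂ :=
    fun μ => (1 : Matrix (Fin 4) (Fin 4) ℂ) ⊗ₖ dgB (cdiag (cl μ)) (ql μ) with hL1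
  set R1 : Fin 4 → Matrix Intl Intl ℂ :=
    fun μ => (1 : Matrix (Fin 4) (Fin 4) ℂ) ⊗ₖ dgB (cdiag (cr μ)) (qr μ) with hR1
  set L2 : Fin 4 → Matrix Intl Intl ℂ :=
    fun μ => msect (sm4 (cl μ) (ml μ)) (sm4 (cr μ) (mr μ)) with hL2
  set R2 : Fin 4 → Matrix Intl Intl ℂ :=
    fun μ => msect (sm4 (cr μ) (mr μ)) (sm4 (cl μ) (ml μ)) with hR2
  set A1 : Matrix HalfNoS HalfNoS ℂ := ∑ μ, ∑ α, (e μ α : ℂ) • (sigE α ⊗ₖ L1 μ) with hA1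
  set A2 : Matrix HalfNoS HalfNoS ℂ := ∑ μ, ∑ α, (e μ α : ℂ) • (sigTE α ⊗ₖ R1 μ) with hA2
  set A3 : Matrix HalfNoS HalfNoS ℂ := ∑ μ, ∑ α, (e μ α : ℂ) • (sigE α ⊗ₖ L2 μ) with hA3
  set A4 : Matrix HalfNoS HalfNoS ℂ := ∑ μ, ∑ α, (e μ α : ℂ) • (sigTE α ⊗ₖ R2 μ) with hA4
  -- Hermiticity of (-I) • X  ↔  X + Xᴴ = 0
  have h1 : ∀ X : Matrix Full Full ℂ, ((-Complex.I) • X).IsHermitian ↔ X + Xᴴ = 0 := by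
    intro X
    unfold Matrix.IsHermitian
    rw [conjTranspose_smul]
    have : star (-Complex.I) = Complex.I := by simp
    rw [this, neg_smul, eq_neg_iff_add_eq_zero, ← smul_add, smul_eq_zero]
    simp only [Complex.I_ne_zero, false_or]
    constructor <;> intro h <;> rw [add_comm] <;> exact h
  rw [h1]
  -- conjugate transposes of the A-blocks
  have hA2H : A2ᴴ = ∑ μ, ∑ α, (e μ α : ℂ) • (sigE α ⊗ₖ (R1 μ)ᴴ) := by
    rw [hA2, conjTranspose_sum]
    refine Finset.sum_congr rfl fun μ _ => ?_
    rw [conjTranspose_sum]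
    refine Finset.sum_congr rfl fun α _ => ?_
    rw [conjTranspose_smul, kron_conjT, sigTE_conjT]
    congr 1
    simp [Complex.star_def, Complex.conj_ofReal]
  have hA4H : A4ᴴ = ∑ μ, ∑ α, (e μ α : ℂ) • (sigE α ⊗ₖ (R2 μ)ᴴ) := by
    rw [hA4, conjTranspose_sum]
    refine Finset.sum_congr rfl fun μ _ => ?_
    rw [conjTranspose_sum]
    refine Finset.sum_congr rfl fun α _ => ?_
    rw [conjTranspose_smul, kron_conjT, sigTE_conjT]
    congr 1
    simp [Complex.star_def, Complex.conj_ofReal]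
  -- combine
  have hcombine : ∀ (L R : Fin 4 → Matrix Intl Intl ℂ),
      (∑ μ, ∑ α, (e μ α : ℂ) • (sigE α ⊗ₖ L μ)) + (∑ μ, ∑ α, (e μ α : ℂ) • (sigE α ⊗ₖ (R μ)ᴴ))
        = ∑ μ, ∑ α, (e μ α : ℂ) • (sigE α ⊗ₖ (L μ + (R μ)ᴴ)) := by
    intro L R
    rw [← Finset.sum_add_distrib]
    refine Finset.sum_congr rfl fun μ _ => ?_
    rw [← Finset.sum_add_distrib]
    refine Finset.sum_congr rfl fun α _ => ?_
    rw [← smul_add, ← Matrix.kronecker_add]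
  have hXH : (dgB (odB A1 A2) (odB A3 A4))ᴴ = dgB (odB A2ᴴ A1ᴴ) (odB A4ᴴ A3ᴴ) := by
    rw [dgB_conjT, odB_conjT, odB_conjT]
  rw [hXH, ← dgB_add, ← odB_add, ← odB_add, dgB_eq_zero, odB_eq_zero, odB_eq_zero]
  -- second components follow from first
  have hsymm : ∀ (U V : Matrix HalfNoS HalfNoS ℂ), U + Vᴴ = 0 → V + Uᴴ = 0 := by
    intro U V h
    have := congrArg Matrix.conjTranspose h
    simpa [Matrix.conjTranspose_add, add_comm] using this
  have hmain : (A1 + A2ᴴ = 0 ∧ A2 + A1ᴴ = 0) ∧ (A3 + A4ᴴ = 0 ∧ A4 + A3ᴴ = 0) ↔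
      (A1 + A2ᴴ = 0) ∧ (A3 + A4ᴴ = 0) := by
    constructor
    · rintro ⟨⟨h1, _⟩, ⟨h3, _⟩⟩; exact ⟨h1, h3⟩
    · rintro ⟨h1, h3⟩; exact ⟨⟨h1, hsymm _ _ h1⟩, ⟨h3, hsymm _ _ h3⟩⟩
  rw [hmain, hA1, hA2H, hcombine, hA3, hA4H, hcombine, indep e he, indep e he]
  rw [← forall_and]
  refine forall_congr' fun μ => ?_
  have hQ : L1 μ + (R1 μ)ᴴ = 0 ↔
      dgB (cdiag (cl μ)) (ql μ) = -(dgB (cdiag (cr μ)) (qr μ))ᴴ := by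
    rw [hL1, hR1]
    simp only [kron_conjT, Matrix.conjTranspose_one]
    rw [add_eq_zero_iff_eq_neg, ← kron_neg_right, one_kron_iff]
  have hM : L2 μ + (R2 μ)ᴴ = 0 ↔
      msect (sm4 (cl μ) (ml μ)) (sm4 (cr μ) (mr μ))
        = -(msect (sm4 (cr μ) (mr μ)) (sm4 (cl μ) (ml μ)))ᴴ := by
    rw [hL2, hR2, add_eq_zero_iff_eq_neg]
  rw [hQ, hM]

end Aux2

section Aux3
open Kronecker

/-- Unfolding of the block condition ρ(A_μ) = −A_μ†. -/
lemma freeA_cond_iff (cr cl : ℂ) (qr ql : Matrix (Fin 2) (Fin 2) ℂ)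
    (mr ml : Matrix (Fin 3) (Fin 3) ℂ) :
    freeA cl cr ql qr ml mr = -(freeA cr cl qr ql mr ml)ᴴ ↔
      dgB (cdiag cl) ql = -(dgB (cdiag cr) qr)ᴴ ∧
        msect (sm4 cl ml) (sm4 cr mr) = -(msect (sm4 cr mr) (sm4 cl ml))ᴴ := by
  unfold freeA freeQ freeM
  simp only [liftQ_eq, liftI_eq]
  rw [dgB_conjT, dgB_conjT, dgB_conjT, ← dgB_neg, ← dgB_neg, ← dgB_neg, dgB_inj, dgB_inj,
    dgB_inj]
  simp only [kron_conjT, Matrix.conjTranspose_one, ← kron_neg_right, one_kron_iff]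
  constructor
  · rintro ⟨⟨h1, -⟩, ⟨h3, -⟩⟩
    exact ⟨h1, h3⟩
  · rintro ⟨h1, h3⟩
    refine ⟨⟨h1, ?_⟩, ⟨h3, ?_⟩⟩
    · exact (negConjT_comm _ _).1 h1
    · exact (negConjT_comm _ _).1 h3

lemma cdiag_iff (cr cl : ℂ) : cdiag cl = -(cdiag cr)ᴴ ↔ cl = -(starRingEnd ℂ) cr := by
  constructor
  · intro h
    have := Matrix.ext_iff.2 h 0 0
    simpa [cdiag, conjTranspose_apply] using this
  · intro h
    ext i j
    fin_cases i <;> fin_cases j <;>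
      simp [cdiag, conjTranspose_apply, h, Matrix.diagonal_apply]

lemma Qcond_iff (cr cl : ℂ) (qr ql : Matrix (Fin 2) (Fin 2) ℂ) :
    dgB (cdiag cl) ql = -(dgB (cdiag cr) qr)ᴴ ↔
      (cl = -(starRingEnd ℂ) cr ∧ ql = -qrᴴ) := by
  rw [dgB_conjT, ← dgB_neg, dgB_inj, cdiag_iff]

lemma msect_conjT (A B : Matrix (Fin 4) (Fin 4) ℂ) : (msect A B)ᴴ = msect Aᴴ Bᴴ := by
  ext ⟨i, a⟩ ⟨j, b⟩
  by_cases h : a = b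
  · subst h; simp [msect, conjTranspose_apply, apply_ite (starRingEnd ℂ)]
  · simp [msect, conjTranspose_apply, h, Ne.symm h]

lemma msect_neg (A B : Matrix (Fin 4) (Fin 4) ℂ) : msect (-A) (-B) = -msect A B := by
  ext ⟨i, a⟩ ⟨j, b⟩
  simp only [msect, of_apply, Matrix.neg_apply]
  split_ifs <;> simp

lemma msect_inj (A B C D : Matrix (Fin 4) (Fin 4) ℂ) :
    msect A B = msect C D ↔ A = C ∧ B = D := by
  constructor
  · intro h
    have h' := Matrix.ext_iff.2 h
    constructor <;> ext i j
    · simpa [msect] using h' (i, ((0 : Fin 2), (0 : Fin 2))) (j, ((0 : Fin 2), (0 : Fin 2)))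
    · simpa [msect] using h' (i, ((1 : Fin 2), (0 : Fin 2))) (j, ((1 : Fin 2), (0 : Fin 2)))
  · rintro ⟨rfl, rfl⟩; rfl

lemma pred3_succ (i : Fin 3) : pred3 i.succ = i := by
  simp [pred3, Fin.succ]

lemma sm4_neg_conjT (c : ℂ) (m : Matrix (Fin 3) (Fin 3) ℂ) :
    -(sm4 c m)ᴴ = sm4 (-(starRingEnd ℂ) c) (-mᴴ) := by
  ext i j
  by_cases hi : i = 0 <;> by_cases hj : j = 0 <;>
    simp [sm4, conjTranspose_apply, hi, hj]

lemma sm4_inj (c c' : ℂ) (m m' : Matrix (Fin 3) (Fin 3) ℂ) :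
    sm4 c m = sm4 c' m' ↔ c = c' ∧ m = m' := by
  constructor
  · intro h
    have h' := Matrix.ext_iff.2 h
    constructor
    · simpa [sm4] using h' 0 0
    · ext i j
      have := h' i.succ j.succ
      simpa [sm4, Fin.succ_ne_zero, pred3_succ] using this
  · rintro ⟨rfl, rfl⟩; rfl

lemma Mcond_iff (cr cl : ℂ) (mr ml : Matrix (Fin 3) (Fin 3) ℂ) :
    msect (sm4 cl ml) (sm4 cr mr) = -(msect (sm4 cr mr) (sm4 cl ml))ᴴ ↔
      (cl = -(starRingEnd ℂ) cr ∧ ml = -mrᴴ) := by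
  rw [msect_conjT, ← msect_neg, msect_inj, sm4_neg_conjT, sm4_neg_conjT, sm4_inj, sm4_inj]
  constructor
  · rintro ⟨⟨h1, h2⟩, -⟩; exact ⟨h1, h2⟩
  · rintro ⟨h1, h2⟩
    refine ⟨⟨h1, h2⟩, ?_, ?_⟩
    · rw [h1]; simp
    · rw [h2]; simp

end Aux3

/-- selfadjointness of the free 1-form A̸ = −i Σ_μ (γ^μ⊗I₃₂)·A_μ
(γ^μ = Σ_α e^μ_α γ^α_E, e real invertible) is equivalent to ρ(A_μ) = −A_μ† for all μ,
which is equivalent to c^l_μ = −conj(c^r_μ), q^l_μ = −(q^r_μ)†, m^l_μ = −(m^r_μ)†. -/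
theorem statement12 (e : Matrix (Fin 4) (Fin 4) ℝ) (he : IsUnit e)
    (cr cl : Fin 4 → ℂ) (qr ql : Fin 4 → Matrix (Fin 2) (Fin 2) ℂ)
    (mr ml : Fin 4 → Matrix (Fin 3) (Fin 3) ℂ) :
    (((-Complex.I) • ∑ μ, liftSpin (∑ α, (e μ α : ℂ) • gammaE α) *
        freeA (cr μ) (cl μ) (qr μ) (ql μ) (mr μ) (ml μ)).IsHermitian
      ↔ ∀ μ, freeA (cl μ) (cr μ) (ql μ) (qr μ) (ml μ) (mr μ)
          = -(freeA (cr μ) (cl μ) (qr μ) (ql μ) (mr μ) (ml μ))ᴴ) ∧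
    ((∀ μ, freeA (cl μ) (cr μ) (ql μ) (qr μ) (ml μ) (mr μ)
          = -(freeA (cr μ) (cl μ) (qr μ) (ql μ) (mr μ) (ml μ))ᴴ)
      ↔ ∀ μ, cl μ = -(starRingEnd ℂ) (cr μ) ∧ ql μ = -(qr μ)ᴴ ∧ ml μ = -(mr μ)ᴴ) := by
  constructor
  · rw [herm_iff e he]
    refine forall_congr' fun μ => ?_
    rw [freeA_cond_iff]
  · constructor <;> intro h μ
    · obtain ⟨hq, hm⟩ := (freeA_cond_iff _ _ _ _ _ _).1 (h μ)
      obtain ⟨h1, h2⟩ := (Qcond_iff _ _ _ _).1 hq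
      obtain ⟨-, h3⟩ := (Mcond_iff _ _ _ _).1 hm
      exact ⟨h1, h2, h3⟩
    · obtain ⟨h1, h2, h3⟩ := h μ
      rw [freeA_cond_iff, Qcond_iff, Mcond_iff]
      exact ⟨⟨h1, h2⟩, ⟨h1, h3⟩⟩



end TwistSM
end
end

section
/- Let g₁, g₂, g₃ be nonzero reals, let α : ℝ⁴ → ℝ, 𝗊 : ℝ⁴ → SU(2), 𝗇 : ℝ⁴ → SU(3) be differentiable, and set 𝗆 := e^{−iα/3}·𝗇. Let a_μ, B_μ, w_μ : ℝ⁴ → ℝ, W_μ : ℝ⁴ → {traceless Hermitian 2×2 matrices}, g_μ : ℝ⁴ → {Hermitian 3×3 matrices}, V_μ : ℝ⁴ → {traceless Hermitian 3×3 matrices} be differentiable, and define c^r_μ := a_μ − i(g₁/2)B_μ, q^r_μ := w_μI₂ − i(g₂/2)W_μ, m^r_μ := g_μ + i((g₁/6)B_μI₃ + (g₃/2)V_μ). Then the gauge-transformed components satisfy: c^r_μ − i∂_μα = a_μ − i(g₁/2)B′_μ with B′_μ := B_μ + (2/g₁)∂_μα; 𝗊q^r_μ𝗊† + 𝗊(∂_μ𝗊†)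 = w_μI₂ − i(g₂/2)W′_μ with W′_μ := 𝗊W_μ𝗊† + (2i/g₂)𝗊(∂_μ𝗊†) traceless Hermitian; and 𝗆m^r_μ𝗆† + 𝗆(∂_μ𝗆†) = g′_μ + i((g₁/6)B′_μI₃ + (g₃/2)V′_μ) with g′_μ := 𝗇g_μ𝗇† Hermitian and V′_μ := 𝗇V_μ𝗇† − (2i/g₃)𝗇(∂_μ𝗇†) traceless Hermitian. In particular the fields a_μ and w_μ are gauge invariant, g_μ transforms algebraically by conjugation, and B_μ, W_μ, V_μ transform as the Standard Model gauge fields. -/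
open Matrix

noncomputable section

namespace TwistSM

variable {μ : Fin 4} {x : Fin 4 → ℝ}

lemma pdC_const (c : ℂ) : pdC μ (fun _ => c) x = 0 := by simp [pdC]

lemma pdC_add {f g : (Fin 4 → ℝ) → ℂ} (hf : DifferentiableAt ℝ f x)
    (hg : DifferentiableAt ℝ g x) :
    pdC μ (fun y => f y + g y) x = pdC μ f x + pdC μ g x := by
  unfold pdC; rw [fderiv_fun_add hf hg]; rfl

lemma pdC_mul {f g : (Fin 4 → ℝ) → ℂ} (hf : DifferentiableAt ℝ f x)
    (hg : DifferentiableAt ℝ g x) :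
    pdC μ (fun y => f y * g y) x = pdC μ f x * g x + f x * pdC μ g x := by
  unfold pdC; rw [fderiv_fun_mul hf hg]
  simp [mul_comm, smul_eq_mul]
  ring

lemma pdC_sum {ι : Type*} (s : Finset ι) {f : ι → (Fin 4 → ℝ) → ℂ}
    (hf : ∀ i ∈ s, DifferentiableAt ℝ (f i) x) :
    pdC μ (fun y => ∑ i ∈ s, f i y) x = ∑ i ∈ s, pdC μ (f i) x := by
  unfold pdC
  rw [(HasFDerivAt.fun_sum (fun i hi => (hf i hi).hasFDerivAt)).fderiv]
  simp

lemma pdC_conj {f : (Fin 4 → ℝ) → ℂ} (hf : DifferentiableAt ℝ f x) :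
    pdC μ (fun y => (starRingEnd ℂ) (f y)) x = (starRingEnd ℂ) (pdC μ f x) := by
  unfold pdC
  have : (fun y => (starRingEnd ℂ) (f y)) = fun y => star (f y) := rfl
  rw [this, (hf.hasFDerivAt.star).fderiv]
  simp

lemma pdC_prod {ι : Type*} [DecidableEq ι] (s : Finset ι) {f : ι → (Fin 4 → ℝ) → ℂ}
    (hf : ∀ i ∈ s, DifferentiableAt ℝ (f i) x) :
    pdC μ (fun y => ∏ i ∈ s, f i y) x
      = ∑ i ∈ s, (∏ j ∈ s.erase i, f j x) * pdC μ (f i) x := by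
  unfold pdC
  rw [(HasFDerivAt.finset_prod (fun i hi => (hf i hi).hasFDerivAt)).fderiv]
  simp [smul_eq_mul]


variable {μ : Fin 4} {x : Fin 4 → ℝ}

lemma pdM_mul {l m p : Type} [Fintype m] {F : (Fin 4 → ℝ) → Matrix l m ℂ}
    {G : (Fin 4 → ℝ) → Matrix m p ℂ}
    (hF : ∀ i j, DifferentiableAt ℝ (fun y => F y i j) x)
    (hG : ∀ i j, DifferentiableAt ℝ (fun y => G y i j) x) :
    pdM μ (fun y => F y * G y) x = pdM μ F x * G x + F x * pdM μ G x := by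
  ext i j
  have h1 : (fun y => (F y * G y) i j) = fun y => ∑ k, F y i k * G y k j :=
    funext fun y => Matrix.mul_apply
  simp only [pdM, Matrix.of_apply, Matrix.add_apply, Matrix.mul_apply]
  rw [pdC_sum _ (fun k _ => ((hF i k).fun_mul (hG k j))), ← Finset.sum_add_distrib]
  exact Finset.sum_congr rfl fun k _ => pdC_mul (hF i k) (hG k j)

lemma pdM_conjT {l m : Type} {F : (Fin 4 → ℝ) → Matrix l m ℂ}
    (hF : ∀ i j, DifferentiableAt ℝ (fun y => F y i j) x) :
    pdM μ (fun y => (F y)ᴴ) x = (pdM μ F x)ᴴ := by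
  ext i j
  simp only [pdM, Matrix.of_apply, Matrix.conjTranspose_apply]
  exact pdC_conj (hF j i)

lemma pdM_const {l m : Type} (A : Matrix l m ℂ) : pdM μ (fun _ => A) x = 0 := by
  ext i j; simp [pdM, pdC]

lemma pdM_smulf {l m : Type} {f : (Fin 4 → ℝ) → ℂ} {F : (Fin 4 → ℝ) → Matrix l m ℂ}
    (hf : DifferentiableAt ℝ f x)
    (hF : ∀ i j, DifferentiableAt ℝ (fun y => F y i j) x) :
    pdM μ (fun y => f y • F y) x = pdC μ f x • F x + f x • pdM μ F x := by
  ext i j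
  simp only [pdM, Matrix.of_apply, Matrix.add_apply, Matrix.smul_apply, smul_eq_mul]
  exact pdC_mul hf (hF i j)

lemma pdC_det {n : Type} [Fintype n] [DecidableEq n] {A : (Fin 4 → ℝ) → Matrix n n ℂ}
    (hA : ∀ i j, DifferentiableAt ℝ (fun y => A y i j) x) :
    pdC μ (fun y => (A y).det) x = ((A x).adjugate * pdM μ A x).trace := by
  classical
  set D := pdM μ A x with hD
  have h1 : (fun y => (A y).det)
      = fun y => ∑ σ : Equiv.Perm n, (Equiv.Perm.sign σ : ℂ) * ∏ i, A y (σ i) i :=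
    funext fun y => Matrix.det_apply' _
  have hprod : ∀ σ : Equiv.Perm n, DifferentiableAt ℝ (fun y => ∏ i, A y (σ i) i) x := by
    intro σ
    exact (HasFDerivAt.finset_prod (fun i (_ : i ∈ Finset.univ) => (hA (σ i) i).hasFDerivAt)).differentiableAt
  rw [h1, pdC_sum _ (fun σ _ => (differentiableAt_const _).fun_mul (hprod σ))]
  have h2 : ∀ σ : Equiv.Perm n,
      pdC μ (fun y => (Equiv.Perm.sign σ : ℂ) * ∏ i, A y (σ i) i) x
        = (Equiv.Perm.sign σ : ℂ) * ∑ i, (∏ j ∈ Finset.univ.erase i, A x (σ j) j) * D (σ i) i := by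
    intro σ
    rw [pdC_mul (differentiableAt_const _) (hprod σ), pdC_const, zero_mul, zero_add,
      pdC_prod _ (fun i _ => hA (σ i) i)]
    rfl
  simp only [h2]
  -- RHS: trace
  have h3 : ((A x).adjugate * D).trace
      = ∑ i, ((A x).updateCol i (fun k => D k i)).det := by
    rw [Matrix.trace]
    refine Finset.sum_congr rfl fun i _ => ?_
    rw [Matrix.diag_apply, Matrix.mul_apply, ← Matrix.cramer_apply]
    rw [Matrix.cramer_eq_adjugate_mulVec]
    rfl
  rw [h3]
  have h4 : ∀ i, ((A x).updateCol i (fun k => D k i)).det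
      = ∑ σ : Equiv.Perm n, (Equiv.Perm.sign σ : ℂ)
          * (D (σ i) i * ∏ j ∈ Finset.univ.erase i, A x (σ j) j) := by
    intro i
    rw [Matrix.det_apply']
    refine Finset.sum_congr rfl fun σ _ => ?_
    congr 1
    rw [← Finset.mul_prod_erase _ _ (Finset.mem_univ i)]
    congr 1
    · simp [Matrix.updateCol_apply]
    · refine Finset.prod_congr rfl fun j hj => ?_
      rw [Matrix.updateCol_apply, if_neg (Finset.mem_erase.mp hj).1]
  simp only [h4]
  rw [Finset.sum_comm]
  refine Finset.sum_congr rfl fun σ _ => ?_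
  rw [Finset.mul_sum]
  exact Finset.sum_congr rfl fun i _ => by ring


variable {μ : Fin 4} {x : Fin 4 → ℝ} {n : Type} [Fintype n] [DecidableEq n]

lemma adjugate_of_unitary {A : Matrix n n ℂ} (h1 : Aᴴ * A = 1) (h2 : A.det = 1) :
    A.adjugate = Aᴴ := by
  have h3 : A * A.adjugate = 1 := by rw [Matrix.mul_adjugate, h2, one_smul]
  calc A.adjugate = 1 * A.adjugate := (one_mul _).symm
    _ = (Aᴴ * A) * A.adjugate := by rw [h1]
    _ = Aᴴ * (A * A.adjugate) := by rw [Matrix.mul_assoc]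
    _ = Aᴴ := by rw [h3, mul_one]

omit [Fintype n] [DecidableEq n] in
lemma dconjT {q : (Fin 4 → ℝ) → Matrix n n ℂ}
    (hqd : ∀ k l, Differentiable ℝ fun y => q y k l) :
    ∀ k l, DifferentiableAt ℝ (fun y => (q y)ᴴ k l) x :=
  fun k l => ((hqd l k) x).star

lemma unitary_facts {q : (Fin 4 → ℝ) → Matrix n n ℂ}
    (hq : ∀ y, (q y)ᴴ * q y = 1 ∧ (q y).det = 1)
    (hqd : ∀ k l, Differentiable ℝ fun y => q y k l) :
    q x * pdM μ (fun y => (q y)ᴴ) x = -(pdM μ q x * (q x)ᴴ) ∧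
    (q x * pdM μ (fun y => (q y)ᴴ) x).trace = 0 ∧
    (q x * pdM μ (fun y => (q y)ᴴ) x)ᴴ = -(q x * pdM μ (fun y => (q y)ᴴ) x) := by
  have hqx : ∀ y, q y * (q y)ᴴ = 1 := fun y => mul_eq_one_comm.mp (hq y).1
  have hd' := dconjT (x := x) hqd
  have h0 : pdM μ (fun y => q y * (q y)ᴴ) x = 0 := by
    rw [show (fun y => q y * (q y)ᴴ) = fun _ => (1 : Matrix n n ℂ) from funext hqx]
    exact pdM_const 1
  have hsum : pdM μ q x * (q x)ᴴ + q x * pdM μ (fun y => (q y)ᴴ) x = 0 := by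
    rw [← pdM_mul (fun k l => hqd k l x) hd', h0]
  have h1 : q x * pdM μ (fun y => (q y)ᴴ) x = -(pdM μ q x * (q x)ᴴ) := by
    linear_combination (norm := module) hsum
  refine ⟨h1, ?_, ?_⟩
  · have hdet : pdC μ (fun y => (q y).det) x = 0 := by
      rw [show (fun y => (q y).det) = fun _ => (1 : ℂ) from funext fun y => (hq y).2]
      exact pdC_const 1
    have := pdC_det (μ := μ) (x := x) (A := q) (fun k l => hqd k l x)
    rw [hdet, adjugate_of_unitary (hq x).1 (hq x).2] at this
    rw [h1, Matrix.trace_neg, Matrix.trace_mul_comm, ← this, neg_zero]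
  · rw [Matrix.conjTranspose_mul, ← pdM_conjT hd']
    simp only [Matrix.conjTranspose_conjTranspose]
    rw [h1, neg_neg]


variable {μ : Fin 4} {x : Fin 4 → ℝ}

lemma diff_ofReal {f : (Fin 4 → ℝ) → ℝ} (hf : Differentiable ℝ f) :
    Differentiable ℝ (fun y => ((f y : ℝ) : ℂ)) :=
  Complex.ofRealCLM.differentiable.comp hf

lemma pdC_ofReal {f : (Fin 4 → ℝ) → ℝ} (hf : Differentiable ℝ f) :
    pdC μ (fun y => ((f y : ℝ) : ℂ)) x = (pdR μ f x : ℂ) := by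
  unfold pdC pdR
  have : (fun y => ((f y : ℝ) : ℂ)) = (⇑Complex.ofRealCLM ∘ f) := rfl
  rw [this, (Complex.ofRealCLM.hasFDerivAt.comp x (hf x).hasFDerivAt).fderiv]
  simp

lemma pdC_cexp_const_mul (c : ℂ) {f : (Fin 4 → ℝ) → ℝ} (hf : Differentiable ℝ f) :
    pdC μ (fun y => Complex.exp (c * ((f y : ℝ) : ℂ))) x
      = Complex.exp (c * (f x : ℂ)) * (c * (pdR μ f x : ℂ)) := by
  have hc : DifferentiableAt ℝ (fun y => c * ((f y : ℝ) : ℂ)) x :=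
    ((diff_ofReal hf) x).const_mul c
  unfold pdC
  rw [(hc.hasFDerivAt.cexp).fderiv]
  simp only [ContinuousLinearMap.smul_apply, smul_eq_mul]
  congr 1
  rw [fderiv_const_mul ((diff_ofReal hf) x) c]
  simp only [ContinuousLinearMap.smul_apply, smul_eq_mul]
  congr 1
  exact pdC_ofReal hf


/-- gauge transformation of the physical fields.  With 𝗆 = e^{−iα/3}𝗇,
the fields a_μ and w_μ are invariant, g_μ transforms by conjugation, and B_μ, W_μ, V_μ
transform as the Standard Model gauge fields. -/
theorem statement16 (g1 g2 g3 : ℝ) (hg1 : g1 ≠ 0) (hg2 : g2 ≠ 0) (hg3 : g3 ≠ 0)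
    (α : (Fin 4 → ℝ) → ℝ)
    (q : (Fin 4 → ℝ) → Matrix (Fin 2) (Fin 2) ℂ)
    (n : (Fin 4 → ℝ) → Matrix (Fin 3) (Fin 3) ℂ)
    (hα : Differentiable ℝ α)
    (hq : ∀ x, (q x)ᴴ * q x = 1 ∧ (q x).det = 1)
    (hn : ∀ x, (n x)ᴴ * n x = 1 ∧ (n x).det = 1)
    (hqd : ∀ k l, Differentiable ℝ fun x => q x k l)
    (hnd : ∀ k l, Differentiable ℝ fun x => n x k l)
    (aa B w : Fin 4 → (Fin 4 → ℝ) → ℝ)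
    (W : Fin 4 → (Fin 4 → ℝ) → Matrix (Fin 2) (Fin 2) ℂ)
    (gH V : Fin 4 → (Fin 4 → ℝ) → Matrix (Fin 3) (Fin 3) ℂ)
    (hW : ∀ μ x, (W μ x).IsHermitian ∧ (W μ x).trace = 0)
    (hgH : ∀ μ x, (gH μ x).IsHermitian)
    (hV : ∀ μ x, (V μ x).IsHermitian ∧ (V μ x).trace = 0)
    (had : ∀ μ, Differentiable ℝ (aa μ))
    (hBd : ∀ μ, Differentiable ℝ (B μ))
    (hwd : ∀ μ, Differentiable ℝ (w μ))
    (hWd : ∀ μ k l, Differentiable ℝ fun x => W μ x k l)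
    (hgd : ∀ μ k l, Differentiable ℝ fun x => gH μ x k l)
    (hVd : ∀ μ k l, Differentiable ℝ fun x => V μ x k l) :
    let m : (Fin 4 → ℝ) → Matrix (Fin 3) (Fin 3) ℂ :=
      fun x => Complex.exp (-(Complex.I * (α x : ℂ))/3) • n x
    let cr : Fin 4 → (Fin 4 → ℝ) → ℂ :=
      fun μ x => (aa μ x : ℂ) - Complex.I * ((g1 : ℂ)/2) * (B μ x : ℂ)
    let qr : Fin 4 → (Fin 4 → ℝ) → Matrix (Fin 2) (Fin 2) ℂ :=
      fun μ x => (w μ x : ℂ) • 1 - (Complex.I * ((g2 : ℂ)/2)) • W μ x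
    let mr : Fin 4 → (Fin 4 → ℝ) → Matrix (Fin 3) (Fin 3) ℂ :=
      fun μ x => gH μ x + Complex.I •
        ((((g1 : ℂ)/6) * (B μ x : ℂ)) • (1 : Matrix (Fin 3) (Fin 3) ℂ) + ((g3 : ℂ)/2) • V μ x)
    let B' : Fin 4 → (Fin 4 → ℝ) → ℝ := fun μ x => B μ x + (2/g1) * pdR μ α x
    let W' : Fin 4 → (Fin 4 → ℝ) → Matrix (Fin 2) (Fin 2) ℂ :=
      fun μ x => q x * W μ x * (q x)ᴴ
        + (2 * Complex.I/(g2 : ℂ)) • (q x * pdM μ (fun y => (q y)ᴴ) x)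
    let g' : Fin 4 → (Fin 4 → ℝ) → Matrix (Fin 3) (Fin 3) ℂ :=
      fun μ x => n x * gH μ x * (n x)ᴴ
    let V' : Fin 4 → (Fin 4 → ℝ) → Matrix (Fin 3) (Fin 3) ℂ :=
      fun μ x => n x * V μ x * (n x)ᴴ
        - (2 * Complex.I/(g3 : ℂ)) • (n x * pdM μ (fun y => (n y)ᴴ) x)
    (∀ μ x, cr μ x - Complex.I * (pdR μ α x : ℂ)
        = (aa μ x : ℂ) - Complex.I * ((g1 : ℂ)/2) * (B' μ x : ℂ)) ∧
    (∀ μ x, q x * qr μ x * (q x)ᴴ + q x * pdM μ (fun y => (q y)ᴴ) x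
        = (w μ x : ℂ) • 1 - (Complex.I * ((g2 : ℂ)/2)) • W' μ x) ∧
    (∀ μ x, (W' μ x).IsHermitian ∧ (W' μ x).trace = 0) ∧
    (∀ μ x, m x * mr μ x * (m x)ᴴ + m x * pdM μ (fun y => (m y)ᴴ) x
        = g' μ x + Complex.I •
            ((((g1 : ℂ)/6) * (B' μ x : ℂ)) • (1 : Matrix (Fin 3) (Fin 3) ℂ)
              + ((g3 : ℂ)/2) • V' μ x)) ∧
    (∀ μ x, (g' μ x).IsHermitian) ∧
    (∀ μ x, (V' μ x).IsHermitian ∧ (V' μ x).trace = 0) := by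

  intro m cr qr mr B' W' g' V'
  have hg1c : (g1:ℂ) ≠ 0 := Complex.ofReal_ne_zero.mpr hg1
  have hg2c : (g2:ℂ) ≠ 0 := Complex.ofReal_ne_zero.mpr hg2
  have hg3c : (g3:ℂ) ≠ 0 := Complex.ofReal_ne_zero.mpr hg3
  refine ⟨?_, ?_, ?_, ?_, ?_, ?_⟩
  · intro μ x
    show (aa μ x : ℂ) - Complex.I * ((g1 : ℂ)/2) * (B μ x : ℂ) - Complex.I * (pdR μ α x : ℂ)
      = (aa μ x : ℂ) - Complex.I * ((g1 : ℂ)/2) * ((B μ x + (2/g1) * pdR μ α x : ℝ) : ℂ)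
    push_cast
    field_simp
    ring
  · intro μ x
    have hQ : q x * (q x)ᴴ = 1 := mul_eq_one_comm.mp (hq x).1
    show q x * ((w μ x : ℂ) • 1 - (Complex.I * ((g2 : ℂ)/2)) • W μ x) * (q x)ᴴ
        + q x * pdM μ (fun y => (q y)ᴴ) x
      = (w μ x : ℂ) • 1 - (Complex.I * ((g2 : ℂ)/2)) •
          (q x * W μ x * (q x)ᴴ
            + (2 * Complex.I/(g2 : ℂ)) • (q x * pdM μ (fun y => (q y)ᴴ) x))
    have hs : (Complex.I * ((g2:ℂ)/2)) • ((2 * Complex.I/(g2:ℂ))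
          • (q x * pdM μ (fun y => (q y)ᴴ) x)) = -(q x * pdM μ (fun y => (q y)ᴴ) x) := by
      rw [smul_smul]
      have h : Complex.I * ((g2:ℂ)/2) * (2 * Complex.I/(g2:ℂ)) = -1 := by
        field_simp
        ring_nf
        rw [Complex.I_sq]
      rw [h, neg_one_smul]
    have e1 : q x * ((w μ x:ℂ) • 1) * (q x)ᴴ = (w μ x:ℂ) • 1 := by
      rw [Matrix.mul_smul, Matrix.mul_one, Matrix.smul_mul, hQ]
    have e2 : q x * ((Complex.I * ((g2:ℂ)/2)) • W μ x) * (q x)ᴴ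
        = (Complex.I * ((g2:ℂ)/2)) • (q x * W μ x * (q x)ᴴ) := by
      rw [Matrix.mul_smul, Matrix.smul_mul]
    rw [Matrix.mul_sub, Matrix.sub_mul, e1, e2, smul_add, hs]
    abel
  · intro μ x
    have hu := unitary_facts (μ := μ) (x := x) hq hqd
    constructor
    · show (q x * W μ x * (q x)ᴴ
          + (2 * Complex.I/(g2 : ℂ)) • (q x * pdM μ (fun y => (q y)ᴴ) x))ᴴ
        = q x * W μ x * (q x)ᴴ
          + (2 * Complex.I/(g2 : ℂ)) • (q x * pdM μ (fun y => (q y)ᴴ) x)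
      rw [Matrix.conjTranspose_add, Matrix.conjTranspose_smul, hu.2.2]
      have hconj : star (2 * Complex.I/(g2:ℂ)) = -(2 * Complex.I/(g2:ℂ)) := by
        rw [Complex.star_def]
        simp [map_div₀, map_ofNat, Complex.conj_ofReal]
        ring
      rw [hconj, neg_smul, smul_neg, neg_neg]
      congr 1
      rw [Matrix.conjTranspose_mul, Matrix.conjTranspose_mul,
        Matrix.conjTranspose_conjTranspose, (hW μ x).1.eq, Matrix.mul_assoc]
    · show (q x * W μ x * (q x)ᴴ
          + (2 * Complex.I/(g2 : ℂ)) • (q x * pdM μ (fun y => (q y)ᴴ) x)).trace = 0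
      rw [Matrix.trace_add, Matrix.trace_smul, hu.2.1, Matrix.trace_mul_cycle,
        (hq x).1, Matrix.one_mul, (hW μ x).2]
      simp
  · intro μ x
    have hN : n x * (n x)ᴴ = 1 := mul_eq_one_comm.mp (hn x).1
    have hd' := dconjT (x := x) hnd
    have hmH : (fun y => (m y)ᴴ)
        = fun y => Complex.exp (Complex.I/3 * ((α y : ℝ) : ℂ)) • (n y)ᴴ := by
      funext y
      show (Complex.exp (-(Complex.I * ((α y : ℝ) : ℂ))/3) • n y)ᴴ = _
      rw [Matrix.conjTranspose_smul, Complex.star_def, ← Complex.exp_conj]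
      congr 2
      simp only [map_div₀, map_neg, _root_.map_mul, Complex.conj_I, Complex.conj_ofReal,
        Complex.conj_ofNat]
      ring
    have hexp : DifferentiableAt ℝ (fun y => Complex.exp (Complex.I/3 * ((α y : ℝ) : ℂ))) x :=
      (((diff_ofReal hα) x).const_mul _).cexp
    have hpd : pdM μ (fun y => (m y)ᴴ) x
        = (Complex.exp (Complex.I/3 * ((α x : ℝ) : ℂ)) * (Complex.I/3 * ((pdR μ α x : ℝ) : ℂ)))
            • (n x)ᴴ
          + Complex.exp (Complex.I/3 * ((α x : ℝ) : ℂ)) • pdM μ (fun y => (n y)ᴴ) x := by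
      rw [hmH, pdM_smulf hexp hd', pdC_cexp_const_mul (Complex.I/3) hα]
    have hEE' : Complex.exp (-(Complex.I * ((α x : ℝ) : ℂ))/3)
        * Complex.exp (Complex.I/3 * ((α x : ℝ) : ℂ)) = 1 := by
      rw [← Complex.exp_add,
        show -(Complex.I * ((α x : ℝ) : ℂ))/3 + Complex.I/3 * ((α x : ℝ) : ℂ) = 0 by ring,
        Complex.exp_zero]
    have hmHx : (m x)ᴴ = Complex.exp (Complex.I/3 * ((α x : ℝ) : ℂ)) • (n x)ᴴ :=
      congrFun hmH x
    have key1 : m x * mr μ x * (m x)ᴴ = n x * mr μ x * (n x)ᴴ := by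
      show (Complex.exp (-(Complex.I * ((α x : ℝ) : ℂ))/3) • n x) * mr μ x * (m x)ᴴ = _
      rw [hmHx, Matrix.smul_mul, Matrix.smul_mul, Matrix.mul_smul, smul_smul, hEE', one_smul]
    have key2 : m x * pdM μ (fun y => (m y)ᴴ) x
        = (Complex.I/3 * ((pdR μ α x : ℝ) : ℂ)) • (1 : Matrix (Fin 3) (Fin 3) ℂ)
          + n x * pdM μ (fun y => (n y)ᴴ) x := by
      show (Complex.exp (-(Complex.I * ((α x : ℝ) : ℂ))/3) • n x) * pdM μ (fun y => (m y)ᴴ) x = _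
      rw [hpd, Matrix.smul_mul, Matrix.mul_add, Matrix.mul_smul, Matrix.mul_smul, hN,
        smul_add, smul_smul, smul_smul, ← mul_assoc, hEE', one_mul, one_smul]
    show m x * mr μ x * (m x)ᴴ + m x * pdM μ (fun y => (m y)ᴴ) x
      = n x * gH μ x * (n x)ᴴ + Complex.I •
          ((((g1 : ℂ)/6) * ((B μ x + (2/g1) * pdR μ α x : ℝ) : ℂ))
              • (1 : Matrix (Fin 3) (Fin 3) ℂ)
            + ((g3 : ℂ)/2) • (n x * V μ x * (n x)ᴴ
              - (2 * Complex.I/(g3 : ℂ)) • (n x * pdM μ (fun y => (n y)ᴴ) x)))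
    rw [key1, key2]
    have hmr : n x * mr μ x * (n x)ᴴ
        = n x * gH μ x * (n x)ᴴ
          + Complex.I • ((((g1 : ℂ)/6) * ((B μ x : ℝ) : ℂ)) • (1 : Matrix (Fin 3) (Fin 3) ℂ)
            + ((g3 : ℂ)/2) • (n x * V μ x * (n x)ᴴ)) := by
      show n x * (gH μ x + Complex.I •
          ((((g1 : ℂ)/6) * ((B μ x : ℝ) : ℂ)) • (1 : Matrix (Fin 3) (Fin 3) ℂ)
            + ((g3 : ℂ)/2) • V μ x)) * (n x)ᴴ = _
      simp only [Matrix.mul_add, Matrix.add_mul, Matrix.mul_smul, Matrix.smul_mul,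
        Matrix.mul_one, smul_add]
      rw [hN]
    rw [hmr]
    match_scalars
    · rfl
    · push_cast
      field_simp
      ring
    · rfl
    · field_simp
      ring_nf
      simp only [pow_succ, pow_zero, one_mul, Complex.I_sq]
      try ring
  · intro μ x
    show (n x * gH μ x * (n x)ᴴ)ᴴ = n x * gH μ x * (n x)ᴴ
    rw [Matrix.conjTranspose_mul, Matrix.conjTranspose_mul,
      Matrix.conjTranspose_conjTranspose, (hgH μ x).eq, Matrix.mul_assoc]
  · intro μ x
    have hu := unitary_facts (μ := μ) (x := x) hn hnd
    constructor
    · show (n x * V μ x * (n x)ᴴ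
          - (2 * Complex.I/(g3 : ℂ)) • (n x * pdM μ (fun y => (n y)ᴴ) x))ᴴ
        = n x * V μ x * (n x)ᴴ
          - (2 * Complex.I/(g3 : ℂ)) • (n x * pdM μ (fun y => (n y)ᴴ) x)
      rw [Matrix.conjTranspose_sub, Matrix.conjTranspose_smul, hu.2.2]
      have hconj : star (2 * Complex.I/(g3:ℂ)) = -(2 * Complex.I/(g3:ℂ)) := by
        rw [Complex.star_def]
        simp [map_div₀, map_ofNat, Complex.conj_ofReal]
        ring
      rw [hconj, neg_smul, smul_neg, neg_neg]
      congr 1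
      rw [Matrix.conjTranspose_mul, Matrix.conjTranspose_mul,
        Matrix.conjTranspose_conjTranspose, (hV μ x).1.eq, Matrix.mul_assoc]
    · show (n x * V μ x * (n x)ᴴ
          - (2 * Complex.I/(g3 : ℂ)) • (n x * pdM μ (fun y => (n y)ᴴ) x)).trace = 0
      rw [Matrix.trace_sub, Matrix.trace_smul, hu.2.1, Matrix.trace_mul_cycle,
        (hn x).1, Matrix.one_mul, (hV μ x).2]
      simp


end TwistSM
end
end
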